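/- A randomized algorithm M : X → PMF(Y) is (ε,δ)-differentially private if and only if for every pair of adjacent inputs x₀ and x₁ and every rejection region S ⊆ Y, both PFA(x₀,x₁,M,S) + e^ε·PMD(x₀,x₁,M,S) ≥ 1 − δ and e^ε·PFA(x₀,x₁,M,S) + PMD(x₀,x₁,M,S) ≥ 1 − δ hold. -/

import Mathlib

open scoped ENNReal

/-- Probability that a sample from `μ` lands in `S`. -/
noncomputable def prIn {Y : Type} (μ : PMF Y) (S : Set Y) : ℝ≥0∞ :=
  μ.toOuterMeasure S

/-- `(ε,δ)`-differential privacy for a randomized algorithm `M`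
with respect to an adjacency relation `adj`. -/
def IsDP {X Y : Type} (adj : X → X → Prop) (M : X → PMF Y) (ε δ : ℝ) : Prop :=
  ∀ x₀ x₁, adj x₀ x₁ → ∀ S : Set Y,
    prIn (M x₀) S ≤ ENNReal.ofReal (Real.exp ε) * prIn (M x₁) S + ENNReal.ofReal δ

/-- Probability of false alarm (Type I error). -/
noncomputable def PFA {X Y : Type} (x₀ x₁ : X) (M : X → PMF Y) (S : Set Y) : ℝ≥0∞ :=
  prIn (M x₀) S

/-- Probability of missed detection (Type II error). -/
noncomputable def PMD {X Y : Type} (x₀ x₁ : X) (M : X → PMF Y) (S : Set Y) : ℝ≥0∞ :=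
  prIn (M x₁) Sᶜ

lemma prIn_add_compl {Y : Type} (μ : PMF Y) (S : Set Y) :
    prIn μ S + prIn μ Sᶜ = 1 := by
  unfold prIn
  rw [PMF.toOuterMeasure_apply, PMF.toOuterMeasure_apply, ← ENNReal.tsum_add]
  have h := fun y => congrFun (Set.indicator_self_add_compl S (μ : Y → ℝ≥0∞)) y
  simp only [Pi.add_apply] at h
  simp_rw [h]
  exact μ.tsum_coe

lemma prIn_le_one {Y : Type} (μ : PMF Y) (S : Set Y) : prIn μ S ≤ 1 := by
  rw [← μ.tsum_coe, prIn, PMF.toOuterMeasure_apply]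
  exact ENNReal.tsum_le_tsum fun y => Set.indicator_le_self _ _ _

/-- Hypothesis testing interpretation of `(ε,δ)`-differential privacy
(Wasserman–Zhou, Kairouz–Oh–Viswanath). -/
theorem dp_iff_hypothesis_testing {X Y : Type}
    (adj : X → X → Prop) (hsymm : Symmetric adj)
    (M : X → PMF Y) (ε δ : ℝ) (hε : 0 < ε) (hδ0 : 0 ≤ δ) (hδ1 : δ ≤ 1) :
    IsDP adj M ε δ ↔
      ∀ x₀ x₁, adj x₀ x₁ → ∀ S : Set Y,
        (1 - ENNReal.ofReal δ ≤
            PFA x₀ x₁ M S + ENNReal.ofReal (Real.exp ε) * PMD x₀ x₁ M S) ∧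
        (1 - ENNReal.ofReal δ ≤
            ENNReal.ofReal (Real.exp ε) * PFA x₀ x₁ M S + PMD x₀ x₁ M S) := by
  have hδle : ENNReal.ofReal δ ≤ 1 := by
    rw [← ENNReal.ofReal_one]; exact ENNReal.ofReal_le_ofReal hδ1
  constructor
  · intro hDP x₀ x₁ hadj S
    constructor
    · -- use DP on (x₀,x₁) with Sᶜ
      have h := hDP x₀ x₁ hadj Sᶜ
      have h1 : (1 : ℝ≥0∞) ≤ PFA x₀ x₁ M S + ENNReal.ofReal (Real.exp ε) * PMD x₀ x₁ M S
          + ENNReal.ofReal δ := by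
        calc (1 : ℝ≥0∞) = prIn (M x₀) S + prIn (M x₀) Sᶜ := (prIn_add_compl _ _).symm
        _ ≤ prIn (M x₀) S + (ENNReal.ofReal (Real.exp ε) * prIn (M x₁) Sᶜ
              + ENNReal.ofReal δ) := add_le_add_right h _
        _ = PFA x₀ x₁ M S + ENNReal.ofReal (Real.exp ε) * PMD x₀ x₁ M S
              + ENNReal.ofReal δ := by rw [PFA, PMD, add_assoc]
      exact tsub_le_iff_right.mpr h1
    · -- use DP on (x₁,x₀) with S
      have h := hDP x₁ x₀ (hsymm hadj) S
      have h1 : (1 : ℝ≥0∞) ≤ ENNReal.ofReal (Real.exp ε) * PFA x₀ x₁ M S + PMD x₀ x₁ M S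
          + ENNReal.ofReal δ := by
        calc (1 : ℝ≥0∞) = prIn (M x₁) S + prIn (M x₁) Sᶜ := (prIn_add_compl _ _).symm
        _ ≤ (ENNReal.ofReal (Real.exp ε) * prIn (M x₀) S + ENNReal.ofReal δ)
              + prIn (M x₁) Sᶜ := add_le_add_left h _
        _ = ENNReal.ofReal (Real.exp ε) * PFA x₀ x₁ M S + PMD x₀ x₁ M S
              + ENNReal.ofReal δ := by rw [PFA, PMD]; ring
      exact tsub_le_iff_right.mpr h1
  · intro h x₀ x₁ hadj S
    have h1 := (h x₀ x₁ hadj Sᶜ).1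
    rw [PFA, PMD, compl_compl] at h1
    -- h1 : 1 - δ ≤ prIn (M x₀) Sᶜ + e^ε * prIn (M x₁) S
    have h2 : (1 : ℝ≥0∞) ≤ prIn (M x₀) Sᶜ + ENNReal.ofReal (Real.exp ε) * prIn (M x₁) S
        + ENNReal.ofReal δ := by
      calc (1 : ℝ≥0∞) = 1 - ENNReal.ofReal δ + ENNReal.ofReal δ :=
            (tsub_add_cancel_of_le hδle).symm
      _ ≤ _ := add_le_add_left h1 _
    have hkey : prIn (M x₀) S + prIn (M x₀) Sᶜ ≤
        (ENNReal.ofReal (Real.exp ε) * prIn (M x₁) S + ENNReal.ofReal δ)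
        + prIn (M x₀) Sᶜ := by
      rw [prIn_add_compl]
      calc (1 : ℝ≥0∞) ≤ _ := h2
      _ = _ := by ring
    exact (ENNReal.add_le_add_iff_right
      (lt_of_le_of_lt (prIn_le_one (M x₀) Sᶜ) ENNReal.one_lt_top).ne).mp hkey
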